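/- Let T be a first-order theory with a model companion T*. If T* has the ground interpolation property, then T has the ground interpolation property; moreover, every ground interpolant computed with respect to T* is also a ground interpolant with respect to T. -/
import Mathlib


open FirstOrder FirstOrder.Language

universe u v w

namespace PaperFOL

variable {L : FirstOrder.Language.{u, v}}

/-- A sentence is universal: the universal closure of a quantifier-free formula. -/
def IsUniversalSentence (φ : L.Sentence) : Prop :=
  ∃ (n : ℕ) (ψ : L.BoundedFormula Empty n), ψ.IsQF ∧ φ = ψ.alls

/-- The universal fragment `T_∀` of a theory `T`: all universal sentences entailed by `T`. -/
def univFragment (T : L.Theory) : L.Theory :=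
  {φ | IsUniversalSentence φ ∧ T ⊨ᵇ φ}

/-- A sentence `φ` is satisfiable w.r.t. `T`: some model of `T` satisfies `φ`. -/
def SatWith (T : L.Theory) (φ : L.Sentence) : Prop :=
  Theory.IsSatisfiable (T ∪ {φ})

/-- `T` allows quantifier elimination. -/
def HasQE (T : L.Theory) : Prop :=
  ∀ {n : ℕ} (φ : L.BoundedFormula Empty n),
    ∃ ψ : L.BoundedFormula Empty n, ψ.IsQF ∧ T ⊨ᵇ φ.iff ψ

/-- Literals: atomic or negated atomic formulas. -/
inductive IsLiteral {n : ℕ} : L.BoundedFormula Empty n → Prop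
  | atom {φ : L.BoundedFormula Empty n} : φ.IsAtomic → IsLiteral φ
  | negAtom {φ : L.BoundedFormula Empty n} : φ.IsAtomic → IsLiteral φ.not

/-- Clauses: disjunctions of literals. -/
inductive IsClauseFormula {n : ℕ} : L.BoundedFormula Empty n → Prop
  | lit {φ : L.BoundedFormula Empty n} : IsLiteral φ → IsClauseFormula φ
  | sup {φ ψ : L.BoundedFormula Empty n} :
      IsClauseFormula φ → IsLiteral ψ → IsClauseFormula (φ ⊔ ψ)

/-- Two theories over the same signature are co-theories iff they have the same
universal consequences. -/
def CoTheories (T₁ T₂ : L.Theory) : Prop :=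
  ∀ φ : L.Sentence, IsUniversalSentence φ → (T₁ ⊨ᵇ φ ↔ T₂ ⊨ᵇ φ)

/-- The lift of an `L`-theory to the language with additional constants from `α`. -/
def liftT (α : Type w) (T : L.Theory) : (L[[α]]).Theory :=
  (L.lhomWithConstants α).onTheory T

/-- A theory is universal if all its axioms are universal sentences. -/
def IsUniversalTheory (T : L.Theory) : Prop :=
  ∀ φ ∈ T, IsUniversalSentence φ

section Interpolation

/-- `I` is a ground interpolant of `A` and `B` w.r.t. `T`, where `A` is a ground formula with
constants among the shared `Fin nc` and own `Fin na`, `B` with shared `Fin nc` and own `Fin nb`,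
and `I` only contains the shared constants `Fin nc`. -/
def IsGroundInterpolant (T : L.Theory) {nc na nb : ℕ}
    (A : (L[[Fin nc ⊕ Fin na]]).Sentence) (B : (L[[Fin nc ⊕ Fin nb]]).Sentence)
    (I : (L[[Fin nc]]).Sentence) : Prop :=
  I.IsQF ∧
    (liftT (Fin nc ⊕ Fin na) T ∪ {A}) ⊨ᵇ
      ((L.lhomWithConstantsMap (Sum.inl : Fin nc → Fin nc ⊕ Fin na)).onSentence I) ∧
    ¬ Theory.IsSatisfiable (liftT (Fin nc ⊕ Fin nb) T ∪
      {B, (L.lhomWithConstantsMap (Sum.inl : Fin nc → Fin nc ⊕ Fin nb)).onSentence I})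

/-- `A ∧ B` is unsatisfiable w.r.t. `T` (in the joint language with all constants). -/
def JointlyUnsat (T : L.Theory) {nc na nb : ℕ}
    (A : (L[[Fin nc ⊕ Fin na]]).Sentence) (B : (L[[Fin nc ⊕ Fin nb]]).Sentence) : Prop :=
  ¬ Theory.IsSatisfiable (liftT (Fin nc ⊕ (Fin na ⊕ Fin nb)) T ∪
      {(L.lhomWithConstantsMap (Sum.map id Sum.inl)).onSentence A,
       (L.lhomWithConstantsMap (Sum.map id Sum.inr)).onSentence B})

/-- `T` has the ground interpolation property. -/
def GroundInterpolation (T : L.Theory) : Prop :=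
  ∀ (nc na nb : ℕ) (A : (L[[Fin nc ⊕ Fin na]]).Sentence) (B : (L[[Fin nc ⊕ Fin nb]]).Sentence),
    A.IsQF → B.IsQF → JointlyUnsat T A B →
    ∃ I : (L[[Fin nc]]).Sentence, IsGroundInterpolant T A B I

end Interpolation

section Amalgamation

/-- `T` has the amalgamation property. -/
def Amalgamation (T : L.Theory) : Prop :=
  ∀ (A M₁ M₂ : Type w) [L.Structure A] [L.Structure M₁] [L.Structure M₂],
    A ⊨ T → M₁ ⊨ T → M₂ ⊨ T →
    ∀ (f₁ : A ↪[L] M₁) (f₂ : A ↪[L] M₂),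
      ∃ (N : Theory.ModelType.{u, v, w} T) (g₁ : M₁ ↪[L] N) (g₂ : M₂ ↪[L] N),
        ∀ a, g₁ (f₁ a) = g₂ (f₂ a)

/-- `T` has the sub-amalgamation property (the common substructure need not be a model). -/
def SubAmalgamation (T : L.Theory) : Prop :=
  ∀ (A M₁ M₂ : Type w) [L.Structure A] [L.Structure M₁] [L.Structure M₂],
    M₁ ⊨ T → M₂ ⊨ T →
    ∀ (f₁ : A ↪[L] M₁) (f₂ : A ↪[L] M₂),
      ∃ (N : Theory.ModelType.{u, v, w} T) (g₁ : M₁ ↪[L] N) (g₂ : M₂ ↪[L] N),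
        ∀ a, g₁ (f₁ a) = g₂ (f₂ a)

/-- `T` has the strong sub-amalgamation property. -/
def StrongSubAmalgamation (T : L.Theory) : Prop :=
  ∀ (A M₁ M₂ : Type w) [L.Structure A] [L.Structure M₁] [L.Structure M₂],
    M₁ ⊨ T → M₂ ⊨ T →
    ∀ (f₁ : A ↪[L] M₁) (f₂ : A ↪[L] M₂),
      ∃ (N : Theory.ModelType.{u, v, w} T) (g₁ : M₁ ↪[L] N) (g₂ : M₂ ↪[L] N),
        (∀ a, g₁ (f₁ a) = g₂ (f₂ a)) ∧
        (∀ m₁ m₂, g₁ m₁ = g₂ m₂ → ∃ a, m₁ = f₁ a ∧ m₂ = f₂ a)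

end Amalgamation

section ModelCompanion

/-- `T` is model complete: every embedding between models of `T` is elementary. -/
def IsModelComplete (T : L.Theory) : Prop :=
  ∀ (M N : Type w) [L.Structure M] [L.Structure N], M ⊨ T → N ⊨ T →
    ∀ (f : M ↪[L] N) (k : ℕ) (φ : L.Formula (Fin k)) (x : Fin k → M),
      φ.Realize (f ∘ x) ↔ φ.Realize x

/-- `T*` is a model companion of `T`. -/
def IsModelCompanion (T Ts : L.Theory) : Prop :=
  CoTheories T Ts ∧ IsModelComplete.{u, v, w} Ts

/-- The diagram of a structure: all literal sentences (with constants for all elements)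
true in the structure. -/
def diagram (A : Type w) [L.Structure A] : (L[[A]]).Theory :=
  {φ : (L[[A]]).Sentence | IsLiteral φ ∧ A ⊨ φ}

/-- `T*` is a model completion of `T`. -/
def IsModelCompletion (T Ts : L.Theory) : Prop :=
  IsModelCompanion.{u, v, w} T Ts ∧
    ∀ (A : Type w) [L.Structure A], A ⊨ T →
      Theory.IsComplete (liftT A Ts ∪ diagram A)

end ModelCompanion

end PaperFOL



section Aux7

open FirstOrder FirstOrder.Language FirstOrder.Language.BoundedFormula

variable {L : FirstOrder.Language.{u, v}}

theorem aux_isQF_mapTermRel {L' : FirstOrder.Language} {α β : Type*} {g : ℕ → ℕ}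
    {ft : ∀ n, L.Term (α ⊕ Fin n) → L'.Term (β ⊕ Fin (g n))}
    {fr : ∀ n, L.Relations n → L'.Relations n}
    {h : ∀ n, L'.BoundedFormula β (g (n + 1)) → L'.BoundedFormula β (g n + 1)}
    {n : ℕ} {φ : L.BoundedFormula α n} (hφ : φ.IsQF) :
    (φ.mapTermRel ft fr h).IsQF := by
  induction hφ with
  | falsum => exact IsQF.falsum
  | of_isAtomic ha =>
    cases ha with
    | equal t₁ t₂ => exact (IsAtomic.equal _ _).isQF
    | rel R ts => exact (IsAtomic.rel _ _).isQF
  | imp _ _ ih1 ih2 => exact ih1.imp ih2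

theorem aux_isQF_onBoundedFormula {L' : FirstOrder.Language} (g : L →ᴸ L') {α : Type*}
    {n : ℕ} {φ : L.BoundedFormula α n} (hφ : φ.IsQF) : (g.onBoundedFormula φ).IsQF := by
  induction hφ with
  | falsum => exact IsQF.falsum
  | of_isAtomic ha =>
    cases ha with
    | equal t₁ t₂ => exact (IsAtomic.equal _ _).isQF
    | rel R ts => exact (IsAtomic.rel _ _).isQF
  | imp _ _ ih1 ih2 => exact ih1.imp ih2

theorem aux_isQF_equivSentence_symm {α : Type*} {S : (L[[α]]).Sentence} (hS : S.IsQF) :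
    (Formula.equivSentence.symm S).IsQF := by
  have : Formula.equivSentence.symm S
      = (BoundedFormula.relabelEquiv (Equiv.sumEmpty α Empty))
          (BoundedFormula.constantsVarsEquiv S) := rfl
  rw [this]
  exact aux_isQF_mapTermRel (aux_isQF_mapTermRel hS)

/-- The universal closure of the negation of a formula in `k` variables. -/
def negClosure {k : ℕ} (φ : L.Formula (Fin k)) : L.Sentence :=
  (BoundedFormula.relabel (Sum.inr : Fin k → Empty ⊕ Fin k) φ.not).alls

theorem aux_negClosure_universal {k : ℕ} {φ : L.Formula (Fin k)} (h : φ.IsQF) :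
    PaperFOL.IsUniversalSentence (negClosure φ) :=
  ⟨k + 0, _, h.not.relabel _, rfl⟩

theorem aux_sat_iff_exists (T : L.Theory) {α : Type} (S : (L[[α]]).Sentence) :
    Theory.IsSatisfiable (PaperFOL.liftT α T ∪ {S}) ↔
      ∃ (M : Theory.ModelType.{u, v, max u v} T) (v : α → M),
        (Formula.equivSentence.symm S).Realize v := by
  constructor
  · intro h
    obtain ⟨M⟩ := h
    have hM : M ⊨ PaperFOL.liftT α T ∪ {S} := M.is_model
    rw [Theory.model_union_iff, Theory.model_singleton_iff] at hM
    letI : L.Structure M := (L.lhomWithConstants α).reduct M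
    haveI hexp : (L.lhomWithConstants α).IsExpansionOn (M : Type (max u v)) :=
      LHom.isExpansionOn_reduct _ _
    have h1 : (M : Type (max u v)) ⊨ T := (LHom.onTheory_model _ _).1 hM.1
    refine ⟨@Theory.ModelType.of L T M _ h1 M.nonempty',
      fun a => ((L.con a : (L[[α]]).Constants) : M), ?_⟩
    exact (Formula.realize_equivSentence_symm_con (M : Type (max u v)) S).2 hM.2
  · rintro ⟨M, v, hv⟩
    letI : (constantsOn α).Structure M := constantsOn.structure v
    have h1 : (M : Type (max u v)) ⊨ PaperFOL.liftT α T :=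
      (LHom.onTheory_model _ _).2 M.is_model
    have h2 : (M : Type (max u v)) ⊨ S := by
      rw [← Formula.realize_equivSentence_symm_con (M : Type (max u v)) S]
      have hfun : (fun a => ((L.con a : (L[[α]]).Constants) : (M : Type (max u v)))) = v := by
        funext a
        rfl
      rw [hfun]
      exact hv
    haveI hMod : (M : Type (max u v)) ⊨ PaperFOL.liftT α T ∪ {S} :=
      Theory.model_union_iff.2 ⟨h1, Theory.model_singleton_iff.2 h2⟩
    exact ⟨Theory.ModelType.of _ M⟩

theorem aux_exists_iff_not_models (T : L.Theory) {k : ℕ} (φ : L.Formula (Fin k)) :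
    (∃ (M : Theory.ModelType.{u, v, max u v} T) (v : Fin k → M), φ.Realize v) ↔
      ¬ T ⊨ᵇ negClosure φ := by
  rw [Theory.models_sentence_iff]
  simp only [not_forall]
  refine exists_congr fun M => ?_
  have hreal : ∀ (M' : Type (max u v)) [L.Structure M'],
      (M' ⊨ negClosure φ) ↔ ∀ xs : Fin (k + 0) → M', ¬ φ.Realize (xs ∘ Fin.castAdd 0) := by
    intro M' _
    rw [Sentence.Realize, negClosure, BoundedFormula.realize_alls]
    refine forall_congr' fun xs => ?_
    rw [BoundedFormula.realize_relabel, BoundedFormula.realize_not]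
    exact not_congr (iff_of_eq (congrArg₂ (BoundedFormula.Realize φ) rfl
      (Subsingleton.elim _ _)))
  rw [hreal M]
  constructor
  · rintro ⟨v, hv⟩ hall
    have hxs := hall (fun i => v (Fin.cast (add_zero k) i))
    rw [show ((fun i => v (Fin.cast (add_zero k) i)) ∘ Fin.castAdd 0) = v from
      funext fun i => congrArg v (Fin.ext rfl)] at hxs
    exact hxs hv
  · intro h
    rw [not_forall] at h
    obtain ⟨xs, hxs⟩ := h
    rw [Classical.not_not] at hxs
    exact ⟨xs ∘ Fin.castAdd 0, hxs⟩

theorem aux_sat_transfer {T Ts : L.Theory} (hco : PaperFOL.CoTheories T Ts) {α : Type} {k : ℕ}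
    (e : α ≃ Fin k) (S : (L[[α]]).Sentence) (hS : S.IsQF) :
    Theory.IsSatisfiable (PaperFOL.liftT α T ∪ {S}) ↔
      Theory.IsSatisfiable (PaperFOL.liftT α Ts ∪ {S}) := by
  have hq : (Formula.equivSentence.symm S).IsQF := aux_isQF_equivSentence_symm hS
  have hqr : ((Formula.equivSentence.symm S).relabel e).IsQF := hq.relabel _
  have key : ∀ U : L.Theory,
      Theory.IsSatisfiable (PaperFOL.liftT α U ∪ {S}) ↔
        ¬ U ⊨ᵇ negClosure ((Formula.equivSentence.symm S).relabel e) := by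
    intro U
    rw [aux_sat_iff_exists U S, ← aux_exists_iff_not_models]
    refine exists_congr fun M => ?_
    constructor
    · rintro ⟨v, hv⟩
      refine ⟨v ∘ e.symm, ?_⟩
      rw [Formula.realize_relabel]
      rw [show (v ∘ ⇑e.symm) ∘ ⇑e = v from funext fun a => congrArg v (e.symm_apply_apply a)]
      exact hv
    · rintro ⟨w, hw⟩
      rw [Formula.realize_relabel] at hw
      exact ⟨w ∘ e, hw⟩
  rw [key T, key Ts,
    hco _ (aux_negClosure_universal hqr)]

theorem aux_sat_pair_inf {L' : FirstOrder.Language} (X : L'.Theory) (φ ψ : L'.Sentence) :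
    Theory.IsSatisfiable (X ∪ {φ, ψ}) ↔ Theory.IsSatisfiable (X ∪ {φ ⊓ ψ}) := by
  constructor
  · intro h
    obtain ⟨M⟩ := h
    have hM : M ⊨ X ∪ {φ, ψ} := M.is_model
    rw [Theory.model_union_iff, Theory.model_insert_iff, Theory.model_singleton_iff] at hM
    haveI : (M : Type _) ⊨ X ∪ {φ ⊓ ψ} :=
      Theory.model_union_iff.2 ⟨hM.1, Theory.model_singleton_iff.2
        (Formula.realize_inf.2 ⟨hM.2.1, hM.2.2⟩)⟩
    exact ⟨Theory.ModelType.of _ M⟩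
  · intro h
    obtain ⟨M⟩ := h
    have hM : M ⊨ X ∪ {φ ⊓ ψ} := M.is_model
    rw [Theory.model_union_iff, Theory.model_singleton_iff] at hM
    have hinf := Formula.realize_inf.1 hM.2
    haveI : (M : Type _) ⊨ X ∪ {φ, ψ} :=
      Theory.model_union_iff.2 ⟨hM.1, Theory.model_insert_iff.2
        ⟨hinf.1, Theory.model_singleton_iff.2 hinf.2⟩⟩
    exact ⟨Theory.ModelType.of _ M⟩

theorem aux_unsat_transfer {T Ts : L.Theory} (hco : PaperFOL.CoTheories T Ts) {α : Type} {k : ℕ}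
    (e : α ≃ Fin k) (φ ψ : (L[[α]]).Sentence) (hφ : φ.IsQF) (hψ : ψ.IsQF)
    (h : ¬ Theory.IsSatisfiable (PaperFOL.liftT α Ts ∪ {φ, ψ})) :
    ¬ Theory.IsSatisfiable (PaperFOL.liftT α T ∪ {φ, ψ}) := by
  rw [aux_sat_pair_inf] at h ⊢
  exact fun hs => h ((aux_sat_transfer hco e _ (hφ.inf hψ)).1 hs)

theorem aux_models_transfer {T Ts : L.Theory} (hco : PaperFOL.CoTheories T Ts) {α : Type} {k : ℕ}
    (e : α ≃ Fin k) (A C : (L[[α]]).Sentence) (hA : A.IsQF) (hC : C.IsQF)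
    (h : (PaperFOL.liftT α Ts ∪ {A}) ⊨ᵇ C) : (PaperFOL.liftT α T ∪ {A}) ⊨ᵇ C := by
  rw [Theory.models_iff_not_satisfiable] at h ⊢
  rw [Set.union_assoc, Set.singleton_union] at h ⊢
  exact aux_unsat_transfer hco e A C.not hA hC.not h

theorem aux_coTheories_symm {T Ts : L.Theory} (hco : PaperFOL.CoTheories T Ts) :
    PaperFOL.CoTheories Ts T := fun φ h => (hco φ h).symm

end Aux7


/-- ground interpolation transfers from a model companion `T*` down to `T`,
and ground interpolants w.r.t. `T*` are ground interpolants w.r.t. `T`. -/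
theorem statement_7 {L : FirstOrder.Language.{u, v}} (T Ts : L.Theory)
    (hmc : PaperFOL.IsModelCompanion.{u, v, max u v} T Ts) :
    (PaperFOL.GroundInterpolation Ts → PaperFOL.GroundInterpolation T) ∧
    (∀ (nc na nb : ℕ) (A : (L[[Fin nc ⊕ Fin na]]).Sentence)
        (B : (L[[Fin nc ⊕ Fin nb]]).Sentence) (I : (L[[Fin nc]]).Sentence),
        A.IsQF → B.IsQF →
        PaperFOL.IsGroundInterpolant Ts A B I → PaperFOL.IsGroundInterpolant T A B I) := by
  have hco : PaperFOL.CoTheories T Ts := hmc.1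
  have part2 : ∀ (nc na nb : ℕ) (A : (L[[Fin nc ⊕ Fin na]]).Sentence)
      (B : (L[[Fin nc ⊕ Fin nb]]).Sentence) (I : (L[[Fin nc]]).Sentence),
      A.IsQF → B.IsQF →
      PaperFOL.IsGroundInterpolant Ts A B I → PaperFOL.IsGroundInterpolant T A B I := by
    intro nc na nb A B I hA hB hI
    obtain ⟨hIqf, hent, hunsat⟩ := hI
    refine ⟨hIqf, ?_, ?_⟩
    · exact aux_models_transfer hco finSumFinEquiv A _ hA
        (aux_isQF_onBoundedFormula _ hIqf) hent
    · exact aux_unsat_transfer hco finSumFinEquiv B _ hB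
        (aux_isQF_onBoundedFormula _ hIqf) hunsat
  refine ⟨?_, part2⟩
  intro hGI nc na nb A B hA hB hJU
  have e3 : (Fin nc ⊕ (Fin na ⊕ Fin nb)) ≃ Fin (nc + (na + nb)) :=
    (Equiv.sumCongr (Equiv.refl (Fin nc)) finSumFinEquiv).trans finSumFinEquiv
  have hJUs : PaperFOL.JointlyUnsat Ts A B := by
    unfold PaperFOL.JointlyUnsat at hJU ⊢
    exact aux_unsat_transfer (aux_coTheories_symm hco) e3 _ _
      (aux_isQF_onBoundedFormula _ hA) (aux_isQF_onBoundedFormula _ hB) hJU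
  obtain ⟨I, hI⟩ := hGI nc na nb A B hA hB hJUs
  exact ⟨I, part2 nc na nb A B I hA hB hI⟩
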